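/- arXiv:1203.6509 — 3 statements merged into one kernel-verified Lean document; each statement's English description precedes it below -/
import Mathlib

section
/- The content sum of a Young diagram is homogeneous of degree 3 under dilation: for every positive integer s and Young diagram λ, Σ_{(i,j) ∈ sλ} (j − i) = s³ · Σ_{(i,j) ∈ λ} (j − i), where the sums are over cells (i,j) (row i, column j) and are taken in ℤ. -/
/-- Dilation of a Young diagram: `(i, j) ∈ dilate s μ ↔ (i / s, j / s) ∈ μ`. -/
def YoungDiagram.dilate (s : ℕ) (μ : YoungDiagram) : YoungDiagram where
  cells := (Finset.range (s * μ.colLen 0) ×ˢ Finset.range (s * μ.rowLen 0)).filter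
    (fun p => (p.1 / s, p.2 / s) ∈ μ)
  isLowerSet := by
    rintro ⟨i1, j1⟩ ⟨i2, j2⟩ ⟨hi, hj⟩ h
    simp only [Finset.coe_filter, Finset.mem_product, Finset.mem_range, Set.mem_setOf_eq] at h ⊢
    exact ⟨⟨lt_of_le_of_lt hi h.1.1, lt_of_le_of_lt hj h.1.2⟩,
      μ.isLowerSet ⟨Nat.div_le_div_right hi, Nat.div_le_div_right hj⟩ h.2⟩

theorem YoungDiagram.mem_dilate {s : ℕ} (hs : 0 < s) (μ : YoungDiagram) (i j : ℕ) :
    (i, j) ∈ μ.dilate s ↔ (i / s, j / s) ∈ μ := by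
  constructor
  · intro h
    change (i, j) ∈ (μ.dilate s).cells at h
    simp only [YoungDiagram.dilate, Finset.mem_filter, Finset.mem_product, Finset.mem_range] at h
    exact h.2
  · intro h
    show (i, j) ∈ (μ.dilate s).cells
    simp only [YoungDiagram.dilate, Finset.mem_filter, Finset.mem_product, Finset.mem_range]
    refine ⟨⟨?_, ?_⟩, h⟩
    · have h1 : i / s < μ.colLen 0 :=
        lt_of_lt_of_le (YoungDiagram.mem_iff_lt_colLen.mp h) (μ.colLen_anti 0 _ (Nat.zero_le _))
      have := (Nat.div_lt_iff_lt_mul hs).mp h1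
      simpa [Nat.mul_comm] using this
    · have h1 : j / s < μ.rowLen 0 :=
        lt_of_lt_of_le (YoungDiagram.mem_iff_lt_rowLen.mp h) (μ.rowLen_anti 0 _ (Nat.zero_le _))
      have := (Nat.div_lt_iff_lt_mul hs).mp h1
      simpa [Nat.mul_comm] using this

/-- The sum of contents `j - i` over the cells `(i, j)` of a Young diagram. -/
def YoungDiagram.contentSum (μ : YoungDiagram) : ℤ :=
  ∑ c ∈ μ.cells, ((c.2 : ℤ) - (c.1 : ℤ))

/-- The content sum is homogeneous of degree 3 under dilation. -/
theorem contentSum_dilate (s : ℕ) (hs : 0 < s) (μ : YoungDiagram) :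
    (μ.dilate s).contentSum = (s : ℤ) ^ 3 * μ.contentSum := by
  classical
  have key : (μ.dilate s).contentSum
      = ∑ x ∈ μ.cells ×ˢ (Finset.range s ×ˢ Finset.range s),
          (((s * x.1.2 + x.2.2 : ℕ) : ℤ) - ((s * x.1.1 + x.2.1 : ℕ) : ℤ)) := by
    unfold YoungDiagram.contentSum
    refine Finset.sum_nbij' (fun c => ((c.1 / s, c.2 / s), (c.1 % s, c.2 % s)))
      (fun x => (s * x.1.1 + x.2.1, s * x.1.2 + x.2.2)) ?_ ?_ ?_ ?_ ?_
    · intro c hc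
      simp only [Finset.mem_product, Finset.mem_range]
      refine ⟨?_, Nat.mod_lt _ hs, Nat.mod_lt _ hs⟩
      exact (μ.mem_dilate hs c.1 c.2).mp (by simpa using hc)
    · intro x hx
      simp only [Finset.mem_product, Finset.mem_range] at hx
      have h1 : (s * x.1.1 + x.2.1) / s = x.1.1 := by
        rw [Nat.mul_add_div hs, Nat.div_eq_of_lt hx.2.1, Nat.add_zero]
      have h2 : (s * x.1.2 + x.2.2) / s = x.1.2 := by
        rw [Nat.mul_add_div hs, Nat.div_eq_of_lt hx.2.2, Nat.add_zero]
      have := (μ.mem_dilate hs (s * x.1.1 + x.2.1) (s * x.1.2 + x.2.2)).mpr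
        (by rw [h1, h2]; simpa using hx.1)
      simpa using this
    · intro c hc
      simp only []
      rw [Nat.div_add_mod, Nat.div_add_mod]
    · intro x hx
      simp only [Finset.mem_product, Finset.mem_range] at hx
      have h1 : (s * x.1.1 + x.2.1) / s = x.1.1 := by
        rw [Nat.mul_add_div hs, Nat.div_eq_of_lt hx.2.1, Nat.add_zero]
      have h2 : (s * x.1.2 + x.2.2) / s = x.1.2 := by
        rw [Nat.mul_add_div hs, Nat.div_eq_of_lt hx.2.2, Nat.add_zero]
      have m1 : (s * x.1.1 + x.2.1) % s = x.2.1 := by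
        rw [Nat.mul_add_mod, Nat.mod_eq_of_lt hx.2.1]
      have m2 : (s * x.1.2 + x.2.2) % s = x.2.2 := by
        rw [Nat.mul_add_mod, Nat.mod_eq_of_lt hx.2.2]
      simp [h1, h2, m1, m2]
    · intro c hc
      simp only []
      rw [Nat.div_add_mod, Nat.div_add_mod]
  have h0 : ∑ x ∈ Finset.range s ×ˢ Finset.range s, ((x.2 : ℤ) - (x.1 : ℤ)) = 0 := by
    rw [Finset.sum_product]
    have step : ∀ p ∈ Finset.range s, ∑ q ∈ Finset.range s, ((q : ℤ) - (p : ℤ))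
        = (∑ q ∈ Finset.range s, (q : ℤ)) - (s : ℤ) * p := by
      intro p _
      rw [Finset.sum_sub_distrib, Finset.sum_const, Finset.card_range]
      ring
    rw [Finset.sum_congr rfl step, Finset.sum_sub_distrib, Finset.sum_const,
      Finset.card_range, ← Finset.mul_sum]
    simp [nsmul_eq_mul]
  rw [key, Finset.sum_product]
  unfold YoungDiagram.contentSum
  rw [Finset.mul_sum]
  refine Finset.sum_congr rfl fun c hc => ?_
  have hterm : ∀ x ∈ Finset.range s ×ˢ Finset.range s,
      (((s * c.2 + x.2 : ℕ) : ℤ) - ((s * c.1 + x.1 : ℕ) : ℤ))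
        = ((s : ℤ) * c.2 - (s : ℤ) * c.1) + ((x.2 : ℤ) - (x.1 : ℤ)) := by
    intro x hx; push_cast; ring
  rw [Finset.sum_congr rfl hterm, Finset.sum_add_distrib, h0, Finset.sum_const,
    Finset.card_product, Finset.card_range, add_zero]

  ring
end

section
/- If σ₁ and σ₂ are permutations of {1,…,k} whose product σ₁σ₂ is a single k-cycle, then the numbers of cycles satisfy c(σ₁) + c(σ₂) ≤ k + 1, where c(σ) denotes the number of orbits of σ on {1,…,k} (including fixed points). -/
open Equiv

/-- The number of cycles (orbits, including fixed points) of a permutation of `Fin k`. -/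
def cycleCount {k : ℕ} (σ : Equiv.Perm (Fin k)) : ℕ :=
  σ.cycleType.card + (k - σ.support.card)

namespace CycleCountAux

open Equiv.Perm

set_option linter.unusedSectionVars false

variable {α : Type*} [Fintype α] [DecidableEq α]

/-- The join of `SameCycle f` with the pair `(x, y)`. -/
def relJoin (f : Perm α) (x y : α) (a b : α) : Prop :=
  f.SameCycle a b ∨ (f.SameCycle a x ∧ f.SameCycle y b) ∨ (f.SameCycle a y ∧ f.SameCycle x b)

theorem relJoin_refl (f : Perm α) (x y a : α) : relJoin f x y a a := Or.inl (SameCycle.refl f a)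

theorem relJoin_symm {f : Perm α} {x y a b : α} (h : relJoin f x y a b) : relJoin f x y b a := by
  rcases h with h | ⟨h1, h2⟩ | ⟨h1, h2⟩
  · exact Or.inl h.symm
  · exact Or.inr (Or.inr ⟨h2.symm, h1.symm⟩)
  · exact Or.inr (Or.inl ⟨h2.symm, h1.symm⟩)

theorem relJoin_trans {f : Perm α} {x y a b c : α} (h : relJoin f x y a b)
    (h' : relJoin f x y b c) : relJoin f x y a c := by
  rcases h with h | ⟨h1, h2⟩ | ⟨h1, h2⟩ <;> rcases h' with h' | ⟨h1', h2'⟩ | ⟨h1', h2'⟩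
  · exact Or.inl (h.trans h')
  · exact Or.inr (Or.inl ⟨h.trans h1', h2'⟩)
  · exact Or.inr (Or.inr ⟨h.trans h1', h2'⟩)
  · exact Or.inr (Or.inl ⟨h1, h2.trans h'⟩)
  · exact Or.inl (h1.trans ((h2.trans h1').symm.trans h2'))
  · exact Or.inl (h1.trans h2')
  · exact Or.inr (Or.inr ⟨h1, h2.trans h'⟩)
  · exact Or.inl (h1.trans h2')
  · exact Or.inl (h1.trans ((h2.trans h1').symm.trans h2'))

/-- `relJoin` as a setoid. -/
def relJoinSetoid (f : Perm α) (x y : α) : Setoid α :=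
  ⟨relJoin f x y, ⟨fun a => relJoin_refl f x y a, relJoin_symm, relJoin_trans⟩⟩

theorem relJoin_swap_right {f : Perm α} {x y a c : α} (h : relJoin f x y a c) :
    relJoin f x y a (swap x y c) := by
  rcases eq_or_ne c x with rfl | hcx
  · rw [swap_apply_left]
    rcases h with h | ⟨h1, h2⟩ | ⟨h1, h2⟩
    · exact Or.inr (Or.inl ⟨h, SameCycle.refl f y⟩)
    · exact Or.inr (Or.inl ⟨h1, SameCycle.refl f y⟩)
    · exact Or.inl h1
  rcases eq_or_ne c y with rfl | hcy
  · rw [swap_apply_right]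
    rcases h with h | ⟨h1, h2⟩ | ⟨h1, h2⟩
    · exact Or.inr (Or.inr ⟨h, SameCycle.refl f x⟩)
    · exact Or.inl h1
    · exact Or.inr (Or.inr ⟨h1, SameCycle.refl f x⟩)
  · rwa [swap_apply_of_ne_of_ne hcx hcy]

theorem relJoin_apply_right {f : Perm α} {x y a c : α} (h : relJoin f x y a c) :
    relJoin f x y a (f c) := by
  rcases h with h | ⟨h1, h2⟩ | ⟨h1, h2⟩
  · exact Or.inl h.apply_right
  · exact Or.inr (Or.inl ⟨h1, h2.apply_right⟩)
  · exact Or.inr (Or.inr ⟨h1, h2.apply_right⟩)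

theorem relJoin_inv_apply_right {f : Perm α} {x y a c : α} (h : relJoin f x y a c) :
    relJoin f x y a (f⁻¹ c) := by
  rcases h with h | ⟨h1, h2⟩ | ⟨h1, h2⟩
  · exact Or.inl h.symm_apply_right
  · exact Or.inr (Or.inl ⟨h1, h2.symm_apply_right⟩)
  · exact Or.inr (Or.inr ⟨h1, h2.symm_apply_right⟩)

theorem sameCycle_swap_mul_imp_relJoin {f : Perm α} {x y a b : α}
    (h : (swap x y * f).SameCycle a b) : relJoin f x y a b := by
  obtain ⟨n, hn⟩ := h
  subst hn
  induction n using Int.induction_on with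
  | zero => simpa using relJoin_refl f x y a
  | succ n ih =>
    have hstep : ((swap x y * f) ^ ((n : ℤ) + 1)) a
        = (swap x y * f) (((swap x y * f) ^ (n : ℤ)) a) := by
      have : ((swap x y * f) ^ ((n : ℤ) + 1)) = (swap x y * f) * (swap x y * f) ^ (n : ℤ) := by
        rw [add_comm, zpow_add, zpow_one]
      rw [this]; rfl
    rw [hstep, Perm.mul_apply]
    exact relJoin_swap_right (relJoin_apply_right ih)
  | pred n ih =>
    have hstep : ((swap x y * f) ^ (-(n : ℤ) - 1)) a
        = (swap x y * f)⁻¹ (((swap x y * f) ^ (-(n : ℤ))) a) := by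
      have : ((swap x y * f) ^ (-(n : ℤ) - 1))
          = (swap x y * f)⁻¹ * (swap x y * f) ^ (-(n : ℤ)) := by
        rw [sub_eq_add_neg, add_comm, zpow_add, zpow_neg_one]
      rw [this]; rfl
    have hinv : ∀ c : α, (swap x y * f)⁻¹ c = f⁻¹ (swap x y c) := by
      intro c; rw [mul_inv_rev, swap_inv]; rfl
    rw [hstep, hinv]
    exact relJoin_inv_apply_right (relJoin_swap_right ih)

theorem nat_card_option (β : Type*) [Finite β] : Nat.card (Option β) = Nat.card β + 1 := by
  have := Fintype.ofFinite β
  simp [Nat.card_eq_fintype_card]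

/-- Merging: multiplying by a swap decreases the orbit count by at most one. -/
theorem card_quotient_le (f : Perm α) (x y : α) :
    Nat.card (Quotient (SameCycle.setoid f))
      ≤ Nat.card (Quotient (SameCycle.setoid (swap x y * f))) + 1 := by
  set R := relJoinSetoid f x y with hR
  haveI hfin : Finite (Quotient R) := Quotient.finite R
  haveI := Fintype.ofFinite (Quotient R)
  have step1 : Nat.card (Quotient R)
      ≤ Nat.card (Quotient (SameCycle.setoid (swap x y * f))) := by
    have hsurj : Function.Surjective
        (Quotient.map' (s₁ := SameCycle.setoid (swap x y * f)) (s₂ := R) id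
          (fun a b h => sameCycle_swap_mul_imp_relJoin h)) := by
      intro q
      refine Quotient.inductionOn' q (fun a => ⟨Quotient.mk'' a, ?_⟩)
      rfl
    exact Nat.card_le_card_of_surjective _ hsurj
  have step2 : Nat.card (Quotient (SameCycle.setoid f)) ≤ Nat.card (Quotient R) + 1 := by
    rw [← nat_card_option (Quotient R)]
    have wd : ∀ a b : α, f.SameCycle a b →
        (if f.SameCycle a y then (none : Option (Quotient R)) else some (Quotient.mk R a))
          = (if f.SameCycle b y then none else some (Quotient.mk R b)) := by
      intro a b hab
      by_cases hay : f.SameCycle a y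
      · rw [if_pos hay, if_pos (hab.symm.trans hay)]
      · rw [if_neg hay, if_neg (fun hby => hay (hab.trans hby))]
        exact congrArg some (Quotient.sound (Or.inl hab))
    refine Nat.card_le_card_of_injective
      (Quotient.lift (s := SameCycle.setoid f) _ wd) ?_
    intro q₁ q₂
    refine Quotient.inductionOn₂ q₁ q₂ (fun a b h => ?_)
    have hab : (if f.SameCycle a y then (none : Option (Quotient R))
          else some (Quotient.mk R a))
        = (if f.SameCycle b y then none else some (Quotient.mk R b)) := h
    by_cases hay : f.SameCycle a y <;> by_cases hby : f.SameCycle b y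
    · exact Quotient.sound (hay.trans hby.symm)
    · rw [if_pos hay, if_neg hby] at hab; exact absurd hab (by simp)
    · rw [if_neg hay, if_pos hby] at hab; exact absurd hab (by simp)
    · rw [if_neg hay, if_neg hby] at hab
      have h' : relJoin f x y a b := Quotient.exact (Option.some.inj hab)
      rcases h' with h' | ⟨h1, h2⟩ | ⟨h1, h2⟩
      · exact Quotient.sound h'
      · exact absurd h2.symm hby
      · exact absurd h1 hay
  omega

/-- Splitting: for `x` in the support of `f`, multiplying by `swap x (f x)`
increases the orbit count. -/
theorem card_quotient_add_one_le (f : Perm α) (x : α) (hx : x ∈ f.support) :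
    Nat.card (Quotient (SameCycle.setoid f)) + 1
      ≤ Nat.card (Quotient (SameCycle.setoid (swap x (f x) * f))) := by
  have hyx : f x ≠ x := Perm.mem_support.1 hx
  have hsxy : f.SameCycle x (f x) := ⟨1, rfl⟩
  have hτx : (swap x (f x) * f) x = x := by
    rw [Perm.mul_apply, swap_apply_right]
  haveI : Finite (Quotient (SameCycle.setoid f)) := Quotient.finite _
  haveI := Fintype.ofFinite (Quotient (SameCycle.setoid f))
  have keyA : ∀ a b : α, f.SameCycle a b → ¬ f.SameCycle a x →
      (swap x (f x) * f).SameCycle a b := by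
    intro a b hab hax
    obtain ⟨n, -, hn⟩ := SameCycle.exists_pow_eq' hab
    have hpow : ∀ m : ℕ, ((swap x (f x) * f) ^ m) a = (f ^ m) a := by
      intro m
      induction m with
      | zero => rfl
      | succ m ih =>
        have hne1 : f ((f ^ m) a) ≠ x := by
          intro hcon
          exact hax ⟨(m + 1 : ℕ), by rw [zpow_natCast, pow_succ']; exact hcon⟩
        have hne2 : f ((f ^ m) a) ≠ f x := by
          intro hcon
          have : f.SameCycle a (f x) := ⟨(m + 1 : ℕ), by rw [zpow_natCast, pow_succ']; exact hcon⟩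
          exact hax (this.trans hsxy.symm)
        calc ((swap x (f x) * f) ^ (m + 1)) a
            = (swap x (f x) * f) (((swap x (f x) * f) ^ m) a) := by rw [pow_succ']; rfl
          _ = swap x (f x) (f ((f ^ m) a)) := by rw [ih, Perm.mul_apply]
          _ = f ((f ^ m) a) := swap_apply_of_ne_of_ne hne1 hne2
          _ = (f ^ (m + 1)) a := by rw [pow_succ']; rfl
    exact ⟨(n : ℤ), by rw [zpow_natCast, hpow n, hn]⟩
  set T := SameCycle.setoid (swap x (f x) * f) with hT
  have wd : ∀ a b : α, f.SameCycle a b →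
      (if f.SameCycle a x then Quotient.mk T (f x) else Quotient.mk T a)
        = (if f.SameCycle b x then Quotient.mk T (f x) else Quotient.mk T b) := by
    intro a b hab
    by_cases hax : f.SameCycle a x
    · rw [if_pos hax, if_pos (hab.symm.trans hax)]
    · rw [if_neg hax, if_neg (fun hbx => hax (hab.trans hbx))]
      exact Quotient.sound (keyA a b hab hax)
  rw [← nat_card_option]
  refine Nat.card_le_card_of_injective
    (fun o => Option.elim o (Quotient.mk T x)
      (Quotient.lift (s := SameCycle.setoid f) _ wd)) ?_
  -- helper facts for injectivity
  have hfix : ∀ c : α, (swap x (f x) * f).SameCycle x c → x = c := by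
    intro c hc
    exact hc.eq_of_left hτx
  have hdec : ∀ a b : α, (swap x (f x) * f).SameCycle a b → relJoin f x (f x) a b :=
    fun a b hab => sameCycle_swap_mul_imp_relJoin hab
  have hyb : ∀ b : α, ¬ f.SameCycle b x → ¬ (swap x (f x) * f).SameCycle (f x) b := by
    intro b hbx hcon
    rcases hdec _ _ hcon with h' | ⟨h1, h2⟩ | ⟨h1, h2⟩
    · exact hbx (h'.symm.trans hsxy.symm)
    · exact hbx (h2.symm.trans hsxy.symm)
    · exact hbx h2.symm
  intro o₁ o₂ h
  match o₁, o₂ with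
  | none, none => rfl
  | none, some q =>
    exfalso
    refine Quotient.inductionOn q (fun b hb => ?_) h
    have hb' : Quotient.mk T x
        = (if f.SameCycle b x then Quotient.mk T (f x) else Quotient.mk T b) := hb
    by_cases hbx : f.SameCycle b x
    · rw [if_pos hbx] at hb'
      exact hyx (hfix _ (Quotient.exact hb')).symm
    · rw [if_neg hbx] at hb'
      cases hfix _ (Quotient.exact hb')
      exact hbx (SameCycle.refl f x)
  | some q, none =>
    exfalso
    refine Quotient.inductionOn q (fun b hb => ?_) h
    have hb' : (if f.SameCycle b x then Quotient.mk T (f x) else Quotient.mk T b)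
        = Quotient.mk T x := hb
    by_cases hbx : f.SameCycle b x
    · rw [if_pos hbx] at hb'
      exact hyx (hfix _ (Quotient.exact hb'.symm)).symm
    · rw [if_neg hbx] at hb'
      cases hfix _ (Quotient.exact hb'.symm)
      exact hbx (SameCycle.refl f x)
  | some q₁, some q₂ =>
    refine congrArg some ?_
    refine Quotient.inductionOn₂ q₁ q₂ (fun a b hab => ?_) h
    have hab' : (if f.SameCycle a x then Quotient.mk T (f x) else Quotient.mk T a)
        = (if f.SameCycle b x then Quotient.mk T (f x) else Quotient.mk T b) := hab
    by_cases hax : f.SameCycle a x <;> by_cases hbx : f.SameCycle b x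
    · exact Quotient.sound (hax.trans hbx.symm)
    · rw [if_pos hax, if_neg hbx] at hab'
      exact absurd (Quotient.exact hab') (hyb b hbx)
    · rw [if_neg hax, if_pos hbx] at hab'
      exact absurd (Quotient.exact hab'.symm) (hyb a hax)
    · rw [if_neg hax, if_neg hbx] at hab'
      rcases hdec _ _ (Quotient.exact hab') with h' | ⟨h1, h2⟩ | ⟨h1, h2⟩
      · exact Quotient.sound h'
      · exact absurd h1 hax
      · exact absurd (h1.trans hsxy.symm) hax

end CycleCountAux

open CycleCountAux Equiv.Perm in
theorem cycleCount_eq_nat_card {k : ℕ} (σ : Equiv.Perm (Fin k)) :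
    cycleCount σ = Nat.card (Quotient (SameCycle.setoid σ)) := by
  classical
  have wd : ∀ a b : Fin k, σ.SameCycle a b →
      (if h : a ∈ σ.support
        then (Sum.inl ⟨σ.cycleOf a, cycleOf_mem_cycleFactorsFinset_iff.2 h⟩ :
          {c // c ∈ σ.cycleFactorsFinset} ⊕ {z // z ∈ σ.supportᶜ})
        else Sum.inr ⟨a, Finset.mem_compl.2 h⟩)
      = (if h : b ∈ σ.support
        then Sum.inl ⟨σ.cycleOf b, cycleOf_mem_cycleFactorsFinset_iff.2 h⟩
        else Sum.inr ⟨b, Finset.mem_compl.2 h⟩) := by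
    intro a b hab
    by_cases ha : a ∈ σ.support
    · rw [dif_pos ha, dif_pos (hab.mem_support_iff.1 ha)]
      exact congrArg Sum.inl (Subtype.ext hab.cycleOf_eq)
    · rw [dif_neg ha, dif_neg (fun hb => ha (hab.mem_support_iff.2 hb))]
      exact congrArg Sum.inr (Subtype.ext (hab.eq_of_left (Perm.notMem_support.1 ha)))
  have hbij : Function.Bijective (Quotient.lift (s := SameCycle.setoid σ) _ wd) := by
    constructor
    · intro q₁ q₂
      refine Quotient.inductionOn₂ q₁ q₂ (fun a b h => ?_)
      have hab : (if h : a ∈ σ.support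
            then (Sum.inl ⟨σ.cycleOf a, cycleOf_mem_cycleFactorsFinset_iff.2 h⟩ :
              {c // c ∈ σ.cycleFactorsFinset} ⊕ {z // z ∈ σ.supportᶜ})
            else Sum.inr ⟨a, Finset.mem_compl.2 h⟩)
          = (if h : b ∈ σ.support
            then Sum.inl ⟨σ.cycleOf b, cycleOf_mem_cycleFactorsFinset_iff.2 h⟩
            else Sum.inr ⟨b, Finset.mem_compl.2 h⟩) := h
      by_cases ha : a ∈ σ.support <;> by_cases hb : b ∈ σ.support
      · rw [dif_pos ha, dif_pos hb] at hab
        have hcyc : σ.cycleOf a = σ.cycleOf b := Subtype.ext_iff.1 (Sum.inl.inj hab)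
        have hbmem : b ∈ (σ.cycleOf b).support :=
          mem_support_cycleOf_iff.2 ⟨SameCycle.refl σ b, hb⟩
        rw [← hcyc] at hbmem
        exact Quotient.sound (mem_support_cycleOf_iff.1 hbmem).1
      · rw [dif_pos ha, dif_neg hb] at hab; exact absurd hab (by simp)
      · rw [dif_neg ha, dif_pos hb] at hab; exact absurd hab (by simp)
      · rw [dif_neg ha, dif_neg hb] at hab
        have : a = b := Subtype.ext_iff.1 (Sum.inr.inj hab)
        rw [this]
    · rintro (⟨c, hc⟩ | ⟨a, ha⟩)
      · obtain ⟨a, ha1, -⟩ := (mem_cycleFactorsFinset_iff.1 hc).1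
        have hamem : a ∈ σ.support := by
          rw [Perm.mem_support, ← (mem_cycleFactorsFinset_iff.1 hc).2 a (Perm.mem_support.2 ha1)]
          exact ha1
        have hceq : c = σ.cycleOf a := cycle_is_cycleOf (Perm.mem_support.2 ha1) hc
        refine ⟨Quotient.mk _ a, ?_⟩
        show (if h : a ∈ σ.support
            then (Sum.inl ⟨σ.cycleOf a, cycleOf_mem_cycleFactorsFinset_iff.2 h⟩ :
              {c // c ∈ σ.cycleFactorsFinset} ⊕ {z // z ∈ σ.supportᶜ})
            else Sum.inr ⟨a, Finset.mem_compl.2 h⟩) = Sum.inl ⟨c, hc⟩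
        rw [dif_pos hamem]
        exact congrArg Sum.inl (Subtype.ext hceq.symm)
      · have ha' : a ∉ σ.support := Finset.mem_compl.1 ha
        refine ⟨Quotient.mk _ a, ?_⟩
        show (if h : a ∈ σ.support
            then (Sum.inl ⟨σ.cycleOf a, cycleOf_mem_cycleFactorsFinset_iff.2 h⟩ :
              {c // c ∈ σ.cycleFactorsFinset} ⊕ {z // z ∈ σ.supportᶜ})
            else Sum.inr ⟨a, Finset.mem_compl.2 h⟩) = Sum.inr ⟨a, ha⟩
        rw [dif_neg ha']
  have hcard := Nat.card_congr (Equiv.ofBijective _ hbij)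
  rw [hcard, Nat.card_sum]
  simp only [Nat.card_eq_fintype_card, Fintype.card_coe]
  rw [Finset.card_compl, Fintype.card_fin]
  simp [cycleCount, cycleType_def]

open Equiv.Perm in
theorem cycleCount_inv {k : ℕ} (σ : Equiv.Perm (Fin k)) : cycleCount σ⁻¹ = cycleCount σ := by
  simp [cycleCount, cycleType_inv, support_inv]

open CycleCountAux Equiv.Perm in
theorem cycleCount_subadd {k : ℕ} :
    ∀ (n : ℕ) (σ₂ σ₁ : Equiv.Perm (Fin k)), σ₂.support.card ≤ n →
      cycleCount σ₁ + cycleCount σ₂ ≤ k + cycleCount (σ₁ * σ₂) := by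
  intro n
  induction n with
  | zero =>
    intro σ₂ σ₁ hcard
    have h2 : σ₂ = 1 := support_eq_empty_iff.1
      (Finset.card_eq_zero.1 (Nat.le_antisymm hcard (Nat.zero_le _)))
    subst h2
    have : cycleCount (1 : Equiv.Perm (Fin k)) = k := by
      simp [cycleCount, cycleType_one, support_one]
    rw [mul_one, this]
    omega
  | succ n ih =>
    intro σ₂ σ₁ hcard
    by_cases h1 : σ₂ = 1
    · subst h1
      have : cycleCount (1 : Equiv.Perm (Fin k)) = k := by
        simp [cycleCount, cycleType_one, support_one]
      rw [mul_one, this]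
      omega
    · obtain ⟨x, hx⟩ : ∃ x, x ∈ σ₂.support := by
        by_contra hcon
        push_neg at hcon
        exact h1 (support_eq_empty_iff.1 (Finset.eq_empty_of_forall_notMem hcon))
      set s : Equiv.Perm (Fin k) := swap x (σ₂ x) with hs
      have hτcard : (s * σ₂).support.card < σ₂.support.card :=
        card_support_swap_mul (Perm.mem_support.1 hx)
      have hIH := ih (s * σ₂) (σ₁ * s) (by omega)
      have hback : σ₁ * s * (s * σ₂) = σ₁ * σ₂ := by
        rw [mul_assoc, ← mul_assoc s, hs, swap_mul_self, one_mul]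
      rw [hback] at hIH
      have hsplit : cycleCount σ₂ + 1 ≤ cycleCount (s * σ₂) := by
        rw [cycleCount_eq_nat_card, cycleCount_eq_nat_card]
        exact card_quotient_add_one_le σ₂ x hx
      have hmerge : cycleCount σ₁ ≤ cycleCount (σ₁ * s) + 1 := by
        have hq := card_quotient_le σ₁⁻¹ x (σ₂ x)
        rw [← cycleCount_eq_nat_card, ← cycleCount_eq_nat_card] at hq
        have h2 : swap x (σ₂ x) * σ₁⁻¹ = (σ₁ * s)⁻¹ := by
          rw [mul_inv_rev, hs, swap_inv]
        rw [h2, cycleCount_inv, cycleCount_inv] at hq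
        exact hq
      omega

/-- If `σ₁σ₂` is a single `k`-cycle then `c(σ₁) + c(σ₂) ≤ k + 1`:
the genus of the associated bipartite map is non-negative. -/
theorem cycleCount_add_cycleCount_le (k : ℕ) (σ₁ σ₂ : Equiv.Perm (Fin k))
    (h : cycleCount (σ₁ * σ₂) = 1) :
    cycleCount σ₁ + cycleCount σ₂ ≤ k + 1 := by
  have := cycleCount_subadd σ₂.support.card σ₂ σ₁ le_rfl
  rw [h] at this
  exact this
end

section
/- Let G be a finite bipartite multigraph with white vertex set W and black vertex set B, with a supply function p : W → ℝ with p(w) > 0 and a demand function d : B → ℝ with d(b) > 0. Suppose there exists a flow f assigning to each edge e a strictly positive real f(e) > 0 such that for each white vertex w the sum of f over edges incident to w equals p(w), and for each black vertex b the sum of f over edges incident to b equals d(b). Then for every bridge e of G (an edge whose removal disconnects its two endpoints), the connected component of G − e containing the white endpoint of e has total supply strictly greater than its total demand. -/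
open scoped Classical in
/-- In a finite bipartite multigraph (edges `E` joining white endpoint `w e` to black
endpoint `b e`) carrying a strictly positive flow `f` saturating strictly positive
supplies `p` at white vertices and strictly positive demands `d` at black vertices,
for every bridge `e₀` the connected component of `G − e₀` containing the white endpoint
of `e₀` has total supply strictly greater than its total demand.  Here `Reach` is
reachability in the graph with the edge `e₀` removed, and the bridge hypothesis says
that the two endpoints of `e₀` are disconnected in `G − e₀`. -/
theorem supply_gt_demand_in_bridge_component
    {W B E : Type} [Fintype W] [Fintype B] [Fintype E]
    (w : E → W) (b : E → B) (p : W → ℝ) (d : B → ℝ) (f : E → ℝ)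
    (hp : ∀ v, 0 < p v) (hd : ∀ v, 0 < d v) (hf : ∀ e, 0 < f e)
    (hsupply : ∀ v : W, ∑ e ∈ Finset.univ.filter (fun e => w e = v), f e = p v)
    (hdemand : ∀ v : B, ∑ e ∈ Finset.univ.filter (fun e => b e = v), f e = d v)
    (e₀ : E)
    (Adj : W ⊕ B → W ⊕ B → Prop)
    (hAdj : ∀ x y, Adj x y ↔ ∃ e, e ≠ e₀ ∧
      ((x = Sum.inl (w e) ∧ y = Sum.inr (b e)) ∨ (x = Sum.inr (b e) ∧ y = Sum.inl (w e))))
    (Reach : W ⊕ B → W ⊕ B → Prop)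
    (hReach : ∀ x y, Reach x y ↔ Relation.ReflTransGen Adj x y)
    (hbridge : ¬ Reach (Sum.inl (w e₀)) (Sum.inr (b e₀))) :
    (∑ v ∈ Finset.univ.filter (fun v : B => Reach (Sum.inl (w e₀)) (Sum.inr v)), d v) <
      ∑ v ∈ Finset.univ.filter (fun v : W => Reach (Sum.inl (w e₀)) (Sum.inl v)), p v := by
  set s : W ⊕ B := Sum.inl (w e₀) with hs
  -- key equivalence for edges ≠ e₀
  have key : ∀ e : E, e ≠ e₀ → (Reach s (Sum.inl (w e)) ↔ Reach s (Sum.inr (b e))) := by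
    intro e he
    rw [hReach, hReach]
    constructor
    · intro h
      exact h.tail ((hAdj _ _).2 ⟨e, he, Or.inl ⟨rfl, rfl⟩⟩)
    · intro h
      exact h.tail ((hAdj _ _).2 ⟨e, he, Or.inr ⟨rfl, rfl⟩⟩)
  have hW : (∑ v ∈ Finset.univ.filter (fun v : W => Reach s (Sum.inl v)), p v)
      = ∑ e ∈ Finset.univ.filter (fun e => Reach s (Sum.inl (w e))), f e := by
    have h := Finset.sum_fiberwise_eq_sum_filter Finset.univ
      (Finset.univ.filter (fun v : W => Reach s (Sum.inl v))) w f
    simp only [Finset.mem_filter, Finset.mem_univ, true_and] at h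
    rw [← h]
    exact Finset.sum_congr rfl fun v _ => (hsupply v).symm
  have hB : (∑ v ∈ Finset.univ.filter (fun v : B => Reach s (Sum.inr v)), d v)
      = ∑ e ∈ Finset.univ.filter (fun e => Reach s (Sum.inr (b e))), f e := by
    have h := Finset.sum_fiberwise_eq_sum_filter Finset.univ
      (Finset.univ.filter (fun v : B => Reach s (Sum.inr v))) b f
    simp only [Finset.mem_filter, Finset.mem_univ, true_and] at h
    rw [← h]
    exact Finset.sum_congr rfl fun v _ => (hdemand v).symm
  have he₀mem : e₀ ∈ Finset.univ.filter (fun e => Reach s (Sum.inl (w e))) := by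
    simp only [Finset.mem_filter, Finset.mem_univ, true_and, hs, hReach]
    exact Relation.ReflTransGen.refl
  have he₀nmem : e₀ ∉ Finset.univ.filter (fun e => Reach s (Sum.inr (b e))) := by
    simp only [Finset.mem_filter, Finset.mem_univ, true_and]
    exact hbridge
  have hset : Finset.univ.filter (fun e => Reach s (Sum.inl (w e)))
      = insert e₀ (Finset.univ.filter (fun e => Reach s (Sum.inr (b e)))) := by
    ext e
    simp only [Finset.mem_filter, Finset.mem_univ, true_and, Finset.mem_insert]
    by_cases he : e = e₀
    · subst he
      simp only [true_or, iff_true, hs, hReach]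
      exact Relation.ReflTransGen.refl
    · rw [key e he]
      tauto
  rw [hW, hB, hset, Finset.sum_insert he₀nmem]
  have := hf e₀
  linarith
end
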